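/- Let X, Y, Z be discrete random variables on a finite probability space. X and Y are conditionally independent given Z with Z taking at most p values if and only if the joint probability matrix P(X = x, Y = y) can be written as a sum of p nonnegative rank-one matrices, each proportional to an outer product of probability vectors. Consequently, the minimal number of states of a latent variable Z rendering X and Y conditionally independent equals the nonnegative rank of the joint probability matrix of (X, Y). -/

import Mathlib

open Finset

/-- A representation of the joint probability matrix `P` via a latent variable `Z`
with `p` states rendering `X` and `Y` conditionally independent given `Z`:
`P(X=i, Y=j) = Σ_z P(Z=z) P(X=i|Z=z) P(Y=j|Z=z)`. -/
def CIRep {m n : ℕ} (P : Matrix (Fin m) (Fin n) ℝ) (p : ℕ) : Prop :=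
  ∃ (pz : Fin p → ℝ) (px : Fin p → Fin m → ℝ) (py : Fin p → Fin n → ℝ),
    (∀ z, 0 ≤ pz z) ∧ (∑ z, pz z = 1) ∧
    (∀ z i, 0 ≤ px z i) ∧ (∀ z, ∑ i, px z i = 1) ∧
    (∀ z j, 0 ≤ py z j) ∧ (∀ z, ∑ j, py z j = 1) ∧
    (∀ i j, P i j = ∑ z, pz z * px z i * py z j)

/-- `P` is a convex combination of `p` rank-one bivariate probability matrices
(outer products of probability vectors). -/
def ConvexRankOneDecomp {m n : ℕ} (P : Matrix (Fin m) (Fin n) ℝ) (p : ℕ) : Prop :=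
  ∃ (lam : Fin p → ℝ) (u : Fin p → Fin m → ℝ) (v : Fin p → Fin n → ℝ),
    (∀ k, 0 ≤ lam k) ∧ (∑ k, lam k = 1) ∧
    (∀ k i, 0 ≤ u k i) ∧ (∀ k, ∑ i, u k i = 1) ∧
    (∀ k j, 0 ≤ v k j) ∧ (∀ k, ∑ j, v k j = 1) ∧
    (∀ i j, P i j = ∑ k, lam k * u k i * v k j)

/-- The nonnegative rank of a matrix: the smallest `p` admitting a factorization
`P = B * C` with `B, C` entrywise nonnegative. -/
noncomputable def nnRank {m n : ℕ} (P : Matrix (Fin m) (Fin n) ℝ) : ℕ :=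
  sInf {p : ℕ | ∃ (B : Matrix (Fin m) (Fin p) ℝ) (C : Matrix (Fin p) (Fin n) ℝ),
    (∀ i k, 0 ≤ B i k) ∧ (∀ k j, 0 ≤ C k j) ∧ P = B * C}

/-- Conditional independence given a `p`-state latent variable is equivalent to a
convex decomposition of the joint probability matrix into `p` nonnegative rank-one
probability matrices; consequently the minimal number of latent states equals the
nonnegative rank of the joint probability matrix. -/
theorem ci_iff_rank_one_decomp_and_min_states_eq_nnRank {m n : ℕ}
    (P : Matrix (Fin m) (Fin n) ℝ)
    (hpos : ∀ i j, 0 ≤ P i j) (hsum : ∑ i, ∑ j, P i j = 1) :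
    (∀ p : ℕ, CIRep P p ↔ ConvexRankOneDecomp P p) ∧
    sInf {p : ℕ | CIRep P p} = nnRank P := by
  have hm : m ≠ 0 := by
    rintro rfl
    simp at hsum
  have hn : n ≠ 0 := by
    rintro rfl
    simp at hsum
  refine ⟨fun p => Iff.rfl, ?_⟩
  unfold nnRank
  congr 1
  ext p
  simp only [Set.mem_setOf_eq]
  constructor
  · rintro ⟨pz, px, py, hz0, hz1, hx0, hx1, hy0, hy1, hP⟩
    refine ⟨fun i k => pz k * px k i, fun k j => py k j, ?_, ?_, ?_⟩
    · intro i k; exact mul_nonneg (hz0 k) (hx0 k i)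
    · intro k j; exact hy0 k j
    · ext i j
      rw [hP i j]
      rfl
  · rintro ⟨B, C, hB, hC, hPBC⟩
    set b : Fin p → ℝ := fun k => ∑ i, B i k with hb
    set c : Fin p → ℝ := fun k => ∑ j, C k j with hc
    have hb0 : ∀ k, 0 ≤ b k := fun k => Finset.sum_nonneg fun i _ => hB i k
    have hc0 : ∀ k, 0 ≤ c k := fun k => Finset.sum_nonneg fun j _ => hC k j
    have hBz : ∀ k, b k = 0 → ∀ i, B i k = 0 := by
      intro k hk i
      have := (Finset.sum_eq_zero_iff_of_nonneg (fun i _ => hB i k)).mp hk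
      exact this i (Finset.mem_univ i)
    have hCz : ∀ k, c k = 0 → ∀ j, C k j = 0 := by
      intro k hk j
      have := (Finset.sum_eq_zero_iff_of_nonneg (fun j _ => hC k j)).mp hk
      exact this j (Finset.mem_univ j)
    refine ⟨fun k => b k * c k,
      fun k i => if b k = 0 then 1 / m else B i k / b k,
      fun k j => if c k = 0 then 1 / n else C k j / c k,
      fun k => mul_nonneg (hb0 k) (hc0 k), ?_, ?_, ?_, ?_, ?_, ?_⟩
    · calc ∑ k, b k * c k = ∑ k, ∑ i, ∑ j, B i k * C k j := by
            refine Finset.sum_congr rfl fun k _ => ?_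
            rw [hb, hc, Finset.sum_mul_sum]
        _ = ∑ i, ∑ j, ∑ k, B i k * C k j := by
            rw [Finset.sum_comm]
            exact Finset.sum_congr rfl fun i _ => Finset.sum_comm
        _ = ∑ i, ∑ j, P i j := by
            refine Finset.sum_congr rfl fun i _ => Finset.sum_congr rfl fun j _ => ?_
            rw [hPBC, Matrix.mul_apply]
        _ = 1 := hsum
    · intro k i
      dsimp only
      split
      · positivity
      · exact div_nonneg (hB i k) (hb0 k)
    · intro k
      by_cases hk : b k = 0
      · simp [hk, Finset.card_univ, hm, mul_one_div]
      · simp only [hk, if_false]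
        rw [← Finset.sum_div]
        exact div_self hk
    · intro k j
      dsimp only
      split
      · positivity
      · exact div_nonneg (hC k j) (hc0 k)
    · intro k
      by_cases hk : c k = 0
      · simp [hk, Finset.card_univ, hn, mul_one_div]
      · simp only [hk, if_false]
        rw [← Finset.sum_div]
        exact div_self hk
    · intro i j
      rw [hPBC, Matrix.mul_apply]
      refine Finset.sum_congr rfl fun k _ => ?_
      by_cases hk : b k = 0
      · simp [hk, hBz k hk i]
      · by_cases hk' : c k = 0
        · simp [hk', hCz k hk' j]
        · simp only [hk, hk', if_false]
          field_simp
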